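/- Let f₀, f₁ ∈ PL₀(I) be non-commuting, and suppose they satisfy both relations [f₀f₁⁻¹, f₀⁻¹f₁f₀] = 1 and [f₀f₁⁻¹, f₀⁻²f₁f₀²] = 1. Then the subgroup of PL₀(I) generated by f₀ and f₁ is isomorphic to Thompson's group F via an isomorphism carrying the standard generators x₀, x₁ to f₀, f₁. -/

import Mathlib

open scoped commutatorElement

/-- The support of a permutation `f` of `ℝ` : the set of points moved by `f`. -/
def Supp (f : Equiv.Perm ℝ) : Set ℝ := {x : ℝ | f x ≠ x}

/-- `IsPL0 f` says that `f` is (the extension by the identity on `ℝ \ [0,1]` of) a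
piecewise-linear orientation-preserving homeomorphism of the unit interval `[0,1]`
with only finitely many breakpoints; this represents membership in `PL₀(I)`.
The finite set `B` collects the possible points of non-differentiability: away from
`B` the map is locally affine. -/
def IsPL0 (f : Equiv.Perm ℝ) : Prop :=
  StrictMono ⇑f ∧ (∀ x : ℝ, x ≤ 0 → f x = x) ∧ (∀ x : ℝ, 1 ≤ x → f x = x) ∧
    ∃ B : Finset ℝ, ∀ x : ℝ, x ∉ B → ∃ s t : ℝ, ∀ᶠ y in nhds x, f y = s * y + t

/-- `IsOrbital f a b` : the open interval `(a,b)` is an orbital of `f`, i.e. a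
connected component of `Supp f` (an open interval contained in the support whose
endpoints are fixed by `f`). -/
def IsOrbital (f : Equiv.Perm ℝ) (a b : ℝ) : Prop :=
  a < b ∧ Set.Ioo a b ⊆ Supp f ∧ f a = a ∧ f b = b

/-- The two defining relations `[f₀f₁⁻¹, f₁^{f₀}] = 1` and `[f₀f₁⁻¹, f₁^{f₀²}] = 1`
of Thompson's group `F`, for the pair `(f₀, f₁)`.  The paper composes in word order
(functions act on the right), so the paper's word `f₀f₁⁻¹` is the group element
`f₁⁻¹ * f₀` in Mathlib's left-action convention, and the conjugate
`f₁^{f₀} = f₀⁻¹f₁f₀` is the element `f₀ * f₁ * f₀⁻¹`.  Recall `⁅a,b⁆ = 1 ↔ a*b = b*a`. -/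
def ThompsonRel (f₀ f₁ : Equiv.Perm ℝ) : Prop :=
  ⁅f₁⁻¹ * f₀, f₀ * f₁ * f₀⁻¹⁆ = 1 ∧ ⁅f₁⁻¹ * f₀, f₀ ^ 2 * f₁ * (f₀ ^ 2)⁻¹⁆ = 1

/-- The relators of the standard finite presentation
`F ≅ ⟨x₀, x₁ | [x₀x₁⁻¹, x₁^{x₀}] = [x₀x₁⁻¹, x₁^{x₀²}] = 1⟩` of Thompson's group `F`,
written out with the paper's word-order (right-action) convention translated into
Mathlib's multiplication: the word `x₀x₁⁻¹` is `x₁⁻¹ * x₀` and `x₁^{x₀} = x₀⁻¹x₁x₀`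
is `x₀ * x₁ * x₀⁻¹`. -/
def thompsonRels : Set (FreeGroup (Fin 2)) :=
  { ⁅(FreeGroup.of (1 : Fin 2))⁻¹ * FreeGroup.of (0 : Fin 2),
      FreeGroup.of (0 : Fin 2) * FreeGroup.of (1 : Fin 2) * (FreeGroup.of (0 : Fin 2))⁻¹⁆,
    ⁅(FreeGroup.of (1 : Fin 2))⁻¹ * FreeGroup.of (0 : Fin 2),
      FreeGroup.of (0 : Fin 2) ^ 2 * FreeGroup.of (1 : Fin 2) *
        (FreeGroup.of (0 : Fin 2) ^ 2)⁻¹⁆ }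

/-- Thompson's group `F`, given by its standard finite presentation. -/
abbrev ThompsonF : Type := PresentedGroup thompsonRels


theorem Equiv.Perm.apply_inv_self {α : Type*} (f : Equiv.Perm α) (x : α) : f (f⁻¹ x) = x :=
  f.apply_symm_apply x

theorem Equiv.Perm.inv_apply_self {α : Type*} (f : Equiv.Perm α) (x : α) : f⁻¹ (f x) = x :=
  f.symm_apply_apply x

namespace TF


/-- the function of the n-th standard generator acting on ℝ -/
noncomputable def pf (n : ℕ) (t : ℝ) : ℝ := if t ≤ n then t else if t ≤ n+1 then 2*t - n else t+1

/-- its inverse -/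
noncomputable def pg (n : ℕ) (t : ℝ) : ℝ := if t ≤ n then t else if t ≤ n+2 then (t+n)/2 else t - 1

lemma pf_pg (n : ℕ) (t : ℝ) : pf n (pg n t) = t := by
  unfold pf pg; split_ifs <;> first | rfl | linarith

lemma pg_pf (n : ℕ) (t : ℝ) : pg n (pf n t) = t := by
  unfold pf pg; split_ifs <;> first | rfl | linarith

lemma pf_strictMono (n : ℕ) : StrictMono (pf n) := by
  intro a b hab
  unfold pf; split_ifs <;> linarith

noncomputable def φ (n : ℕ) : Equiv.Perm ℝ := ⟨pf n, pg n, pg_pf n, pf_pg n⟩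

@[simp] lemma φ_apply (n : ℕ) (t : ℝ) : φ n t = pf n t := rfl

lemma φ_strictMono (n : ℕ) : StrictMono ⇑(φ n) := pf_strictMono n

lemma le_pf (n : ℕ) (t : ℝ) : t ≤ pf n t := by unfold pf; split_ifs <;> linarith

lemma pf_fix {n : ℕ} {t : ℝ} (h : t ≤ n) : pf n t = t := by unfold pf; split_ifs <;> linarith

lemma pf_gt {n : ℕ} {t : ℝ} (h : (n:ℝ) < t) : t < pf n t := by
  unfold pf; split_ifs <;> linarith

/-- the master conjugation identity -/
lemma pf_conj {k n : ℕ} (h : k < n) (t : ℝ) : pf k (pf n t) = pf (n+1) (pf k t) := by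
  have hk : (k:ℝ) + 1 ≤ n := by exact_mod_cast h
  unfold pf
  push_cast
  split_ifs <;> linarith

lemma φ_conj {k n : ℕ} (h : k < n) : φ k * φ n = φ (n+1) * φ k := by
  ext t
  simpa using pf_conj h t

lemma φ_conj' {k n : ℕ} (h : k < n) : φ k * φ n * (φ k)⁻¹ = φ (n+1) := by
  rw [φ_conj h]; group



/-- the generators of `ThompsonF` -/
def a : ThompsonF := PresentedGroup.of 0
def b : ThompsonF := PresentedGroup.of 1

/-- the standard infinite generating family -/
def x : ℕ → ThompsonF
  | 0 => a
  | 1 => b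
  | (n+2) => a * x (n+1) * a⁻¹

lemma x_shift {n : ℕ} (h : 1 ≤ n) : a * x n * a⁻¹ = x (n+1) := by
  rcases n with _ | m
  · omega
  · rfl

lemma mk_rel_one {r : FreeGroup (Fin 2)} (hr : r ∈ thompsonRels) :
    PresentedGroup.mk thompsonRels r = 1 := by
  have : r ∈ Subgroup.normalClosure thompsonRels := Subgroup.subset_normalClosure hr
  exact (QuotientGroup.eq_one_iff r).mpr this

lemma of_eq_mk (i : Fin 2) :
    (PresentedGroup.of i : ThompsonF) = PresentedGroup.mk thompsonRels (FreeGroup.of i) := rfl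

lemma rel1 : ⁅b⁻¹ * a, a * b * a⁻¹⁆ = 1 := by
  have h := mk_rel_one (Set.mem_insert _ _)
  simpa only [map_commutatorElement, map_mul, map_inv, ← of_eq_mk, a, b] using h

lemma rel2 : ⁅b⁻¹ * a, a ^ 2 * b * (a ^ 2)⁻¹⁆ = 1 := by
  have h := mk_rel_one (Set.mem_insert_of_mem _ rfl)
  simpa only [map_commutatorElement, map_mul, map_inv, map_pow, ← of_eq_mk, a, b] using h

lemma x2 : x 2 = a * b * a⁻¹ := rfl
lemma x3 : x 3 = a * (a * b * a⁻¹) * a⁻¹ := rfl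
lemma x4 : x 4 = a * (a * (a * b * a⁻¹) * a⁻¹) * a⁻¹ := rfl

lemma C12 : x 1 * x 2 * (x 1)⁻¹ = x 3 := by
  have h := (commutatorElement_eq_one_iff_mul_comm).mp rel1
  show b * x 2 * b⁻¹ = x 3
  rw [x2, x3]
  have h2 : b * ((b⁻¹ * a) * (a * b * a⁻¹)) * a⁻¹ = b * ((a * b * a⁻¹) * (b⁻¹ * a)) * a⁻¹ := by
    rw [h]
  calc b * (a * b * a⁻¹) * b⁻¹
      = b * ((a * b * a⁻¹) * (b⁻¹ * a)) * a⁻¹ := by group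
    _ = b * ((b⁻¹ * a) * (a * b * a⁻¹)) * a⁻¹ := h2.symm
    _ = a * (a * b * a⁻¹) * a⁻¹ := by group

lemma C13 : x 1 * x 3 * (x 1)⁻¹ = x 4 := by
  have h := (commutatorElement_eq_one_iff_mul_comm).mp rel2
  have hx3 : a ^ 2 * b * (a ^ 2)⁻¹ = x 3 := by rw [x3, pow_two]; group
  rw [hx3] at h
  show b * x 3 * b⁻¹ = x 4
  rw [x4, ← x3]
  have h2 : b * ((b⁻¹ * a) * x 3) * a⁻¹ = b * (x 3 * (b⁻¹ * a)) * a⁻¹ := by rw [h]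
  calc b * x 3 * b⁻¹
      = b * (x 3 * (b⁻¹ * a)) * a⁻¹ := by group
    _ = b * ((b⁻¹ * a) * x 3) * a⁻¹ := h2.symm
    _ = a * x 3 * a⁻¹ := by group

lemma xeq {m n : ℕ} (h : m = n) : x m = x n := by rw [h]

/-- shifting a conjugation relation up by one -/
lemma C_shift {k n : ℕ} (hk : 1 ≤ k) (hkn : k < n)
    (h : x k * x n * (x k)⁻¹ = x (n+1)) :
    x (k+1) * x (n+1) * (x (k+1))⁻¹ = x (n+2) := by
  have hn : 1 ≤ n := le_trans hk (le_of_lt hkn)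
  rw [← x_shift hk, ← x_shift hn, ← x_shift (by omega : 1 ≤ n+1), ← h]
  group

lemma C_d1 : ∀ m : ℕ, x (m+1) * x (m+2) * (x (m+1))⁻¹ = x (m+3) := by
  intro m
  induction m with
  | zero => exact C12
  | succ p ih => exact C_shift (by omega) (by omega) ih

lemma C_d2 : ∀ m : ℕ, x (m+1) * x (m+3) * (x (m+1))⁻¹ = x (m+4) := by
  intro m
  induction m with
  | zero => exact C13
  | succ p ih => exact C_shift (by omega) (by omega) ih

/-- The full family of relations, indexed by the gap `d`. -/
lemma C_main : ∀ d, 1 ≤ d → ∀ k, 1 ≤ k → x k * x (k+d) * (x k)⁻¹ = x (k+d+1) := by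
  intro d
  induction d using Nat.strong_induction_on with
  | _ d ih =>
    intro hd k hk
    obtain ⟨m, rfl⟩ : ∃ m, k = m+1 := ⟨k-1, by omega⟩
    match d, hd with
    | 1, _ => exact C_d1 m
    | 2, _ => exact C_d2 m
    | (e+3), _ =>
      set k := m + 1 with hkdef
      have h1 : x (k + (e+3)) = x (k+1) * x (k+1+(e+1)) * (x (k+1))⁻¹ := by
        rw [xeq (show k+(e+3) = k+1+(e+1)+1 by omega)]
        exact (ih (e+1) (by omega) (by omega) (k+1) (by omega)).symm
      have hA : x k * x (k+1) * (x k)⁻¹ = x (k+1+1) := ih 1 (by omega) (by omega) k (by omega)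
      have hB : x k * x (k+1+(e+1)) * (x k)⁻¹ = x (k+1+(e+1)+1) := by
        rw [xeq (show k+1+(e+1) = k+(e+2) by omega), xeq (show k+1+(e+1)+1 = k+(e+2)+1 by omega)]
        exact ih (e+2) (by omega) (by omega) k (by omega)
      have hC : x (k+1+1) * x (k+1+(e+1)+1) * (x (k+1+1))⁻¹ = x (k+(e+3)+1) := by
        rw [xeq (show k+1+1 = k+2 by omega), xeq (show k+1+(e+1)+1 = k+2+(e+1) by omega),
            xeq (show k+(e+3)+1 = k+2+(e+1)+1 by omega)]
        exact ih (e+1) (by omega) (by omega) (k+2) (by omega)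
      calc x k * x (k+(e+3)) * (x k)⁻¹
          = (x k * x (k+1) * (x k)⁻¹) * (x k * x (k+1+(e+1)) * (x k)⁻¹) *
            (x k * x (k+1) * (x k)⁻¹)⁻¹ := by rw [h1]; group
        _ = x (k+1+1) * x (k+1+(e+1)+1) * (x (k+1+1))⁻¹ := by rw [hA, hB]
        _ = x (k+(e+3)+1) := hC

/-- all conjugation relations `x_k x_n x_k⁻¹ = x_{n+1}` for `k < n`. -/
lemma xconj {k n : ℕ} (h : k < n) : x k * x n * (x k)⁻¹ = x (n+1) := by
  rcases Nat.eq_zero_or_pos k with rfl | hk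
  · exact x_shift (by omega)
  · have h1 := C_main (n-k) (by omega) k hk
    rw [xeq (show k+(n-k) = n by omega), xeq (show k+(n-k)+1 = n+1 by omega)] at h1
    exact h1


/-! ### The concrete homomorphism -/

lemma phi_comm1 : (φ 1)⁻¹ * φ 3 = φ 2 * (φ 1)⁻¹ := by
  have e2 : φ 1 * φ 2 = φ 3 * φ 1 := φ_conj (by norm_num)
  calc (φ 1)⁻¹ * φ 3 = (φ 1)⁻¹ * (φ 3 * φ 1) * (φ 1)⁻¹ := by group
    _ = (φ 1)⁻¹ * (φ 1 * φ 2) * (φ 1)⁻¹ := by rw [← e2]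
    _ = φ 2 * (φ 1)⁻¹ := by group

lemma phi_comm2 : (φ 1)⁻¹ * φ 4 = φ 3 * (φ 1)⁻¹ := by
  have e2 : φ 1 * φ 3 = φ 4 * φ 1 := φ_conj (by norm_num)
  calc (φ 1)⁻¹ * φ 4 = (φ 1)⁻¹ * (φ 4 * φ 1) * (φ 1)⁻¹ := by group
    _ = (φ 1)⁻¹ * (φ 1 * φ 3) * (φ 1)⁻¹ := by rw [← e2]
    _ = φ 3 * (φ 1)⁻¹ := by group

lemma phi_rel1 : ⁅(φ 1)⁻¹ * φ 0, φ 0 * φ 1 * (φ 0)⁻¹⁆ = 1 := by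
  rw [commutatorElement_eq_one_iff_mul_comm, φ_conj' (by norm_num : 0 < 1)]
  have e1 : φ 0 * φ 2 = φ 3 * φ 0 := φ_conj (by norm_num)
  calc (φ 1)⁻¹ * φ 0 * φ 2 = (φ 1)⁻¹ * (φ 0 * φ 2) := by group
    _ = (φ 1)⁻¹ * (φ 3 * φ 0) := by rw [e1]
    _ = ((φ 1)⁻¹ * φ 3) * φ 0 := by group
    _ = φ 2 * ((φ 1)⁻¹ * φ 0) := by rw [phi_comm1]; group

lemma phi_rel2 : ⁅(φ 1)⁻¹ * φ 0, φ 0 ^ 2 * φ 1 * (φ 0 ^ 2)⁻¹⁆ = 1 := by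
  have h3 : φ 0 ^ 2 * φ 1 * (φ 0 ^ 2)⁻¹ = φ 3 := by
    rw [pow_two, mul_inv_rev]
    calc φ 0 * φ 0 * φ 1 * ((φ 0)⁻¹ * (φ 0)⁻¹)
        = φ 0 * (φ 0 * φ 1 * (φ 0)⁻¹) * (φ 0)⁻¹ := by group
      _ = φ 0 * φ 2 * (φ 0)⁻¹ := by rw [φ_conj' (by norm_num : 0 < 1)]
      _ = φ 3 := φ_conj' (by norm_num)
  rw [commutatorElement_eq_one_iff_mul_comm, h3]
  have e1 : φ 0 * φ 3 = φ 4 * φ 0 := φ_conj (by norm_num)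
  calc (φ 1)⁻¹ * φ 0 * φ 3 = (φ 1)⁻¹ * (φ 0 * φ 3) := by group
    _ = (φ 1)⁻¹ * (φ 4 * φ 0) := by rw [e1]
    _ = ((φ 1)⁻¹ * φ 4) * φ 0 := by group
    _ = φ 3 * ((φ 1)⁻¹ * φ 0) := by rw [phi_comm2]; group

/-- the homomorphism determined by a pair satisfying the two relations -/
noncomputable def pairHom (g₀ g₁ : Equiv.Perm ℝ)
    (h1 : ⁅g₁⁻¹ * g₀, g₀ * g₁ * g₀⁻¹⁆ = 1)
    (h2 : ⁅g₁⁻¹ * g₀, g₀ ^ 2 * g₁ * (g₀ ^ 2)⁻¹⁆ = 1) :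
    ThompsonF →* Equiv.Perm ℝ := by
  refine PresentedGroup.toGroup (f := ![g₀, g₁]) ?_
  intro r hr
  rcases hr with h | h
  · subst h
    simpa only [map_commutatorElement, map_mul, map_inv, map_pow, FreeGroup.lift_apply_of,
      Matrix.cons_val_zero, Matrix.cons_val_one, Matrix.head_cons] using h1
  · subst h
    simpa only [map_commutatorElement, map_mul, map_inv, map_pow, FreeGroup.lift_apply_of,
      Matrix.cons_val_zero, Matrix.cons_val_one, Matrix.head_cons] using h2

@[simp] lemma pairHom_a (g₀ g₁ : Equiv.Perm ℝ) (h1 : _) (h2 : _) :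
    pairHom g₀ g₁ h1 h2 a = g₀ := by
  show pairHom g₀ g₁ h1 h2 (PresentedGroup.of 0) = g₀
  rw [pairHom, PresentedGroup.toGroup.of]
  simp

@[simp] lemma pairHom_b (g₀ g₁ : Equiv.Perm ℝ) (h1 : _) (h2 : _) :
    pairHom g₀ g₁ h1 h2 b = g₁ := by
  show pairHom g₀ g₁ h1 h2 (PresentedGroup.of 1) = g₁
  rw [pairHom, PresentedGroup.toGroup.of]
  simp

/-- the faithful concrete realization of `ThompsonF` -/
noncomputable def ψ : ThompsonF →* Equiv.Perm ℝ := pairHom (φ 0) (φ 1) phi_rel1 phi_rel2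

@[simp] lemma ψ_x : ∀ n, ψ (x n) = φ n := by
  intro n
  induction n using Nat.strong_induction_on with
  | _ n ih =>
    match n with
    | 0 => exact pairHom_a _ _ _ _
    | 1 => exact pairHom_b _ _ _ _
    | (m+2) =>
      show ψ (a * x (m+1) * a⁻¹) = φ (m+2)
      rw [map_mul, map_mul, map_inv, ih (m+1) (by omega)]
      have : ψ a = φ 0 := pairHom_a _ _ _ _
      rw [this]
      exact φ_conj' (by omega)

/-! ### Positive words -/

/-- the positive word given by a list of indices -/
def P (L : List ℕ) : ThompsonF := (L.map x).prod

@[simp] lemma P_nil : P [] = 1 := rfl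
lemma P_cons (i : ℕ) (L : List ℕ) : P (i :: L) = x i * P L := by simp [P]
lemma P_append (L M : List ℕ) : P (L ++ M) = P L * P M := by simp [P]
lemma P_concat (L : List ℕ) (i : ℕ) : P (L ++ [i]) = P L * x i := by simp [P]
lemma P_single (i : ℕ) : P [i] = x i := by simp [P]

lemma ψP_le (L : List ℕ) (t : ℝ) : t ≤ ψ (P L) t := by
  induction L generalizing t with
  | nil => simp
  | cons i M ih =>
    rw [P_cons, map_mul, Equiv.Perm.mul_apply, ψ_x]
    exact le_trans (ih t) (le_pf i _)

lemma ψP_fix (L : List ℕ) (t : ℝ) (h : ∀ i ∈ L, t ≤ i) : ψ (P L) t = t := by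
  induction L with
  | nil => simp
  | cons i M ih =>
    rw [P_cons, map_mul, Equiv.Perm.mul_apply,
      ih (fun j hj => h j (List.mem_cons_of_mem _ hj)), ψ_x]
    exact pf_fix (h i (List.mem_cons_self))

lemma ψP_gt (L : List ℕ) (t : ℝ) (h : ∃ i ∈ L, (i:ℝ) < t) : t < ψ (P L) t := by
  induction L generalizing t with
  | nil => simp at h
  | cons i M ih =>
    rw [P_cons, map_mul, Equiv.Perm.mul_apply, ψ_x]
    obtain ⟨j, hj, hjt⟩ := h
    rcases List.mem_cons.mp hj with rfl | hjM
    · have h1 : t ≤ ψ (P M) t := ψP_le M t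
      have h2 : (j:ℝ) < ψ (P M) t := lt_of_lt_of_le hjt h1
      exact lt_of_le_of_lt h1 (pf_gt h2)
    · exact lt_of_lt_of_le (ih t ⟨j, hjM, hjt⟩) (le_pf i _)

/-- pushing a minimal generator through a positive word -/
lemma push : ∀ (M : List ℕ) (k : ℕ), (∀ a ∈ M, k ≤ a) →
    ∃ M' : List ℕ, M'.length = M.length ∧ x k * P M = P M' * x k := by
  intro M
  induction M with
  | nil => exact fun k _ => ⟨[], rfl, by simp⟩
  | cons i M ih =>
    intro k hk
    obtain ⟨M', hlen, hM'⟩ := ih k (fun j hj => hk j (List.mem_cons_of_mem _ hj))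
    rcases eq_or_lt_of_le (hk i (List.mem_cons_self)) with rfl | hki
    · exact ⟨k :: M', by simp [hlen], by
        rw [P_cons, P_cons, ← mul_assoc, mul_assoc (x k) (x k), hM']; group⟩
    · refine ⟨(i+1) :: M', by simp [hlen], ?_⟩
      have hswap : x k * x i = x (i+1) * x k := by
        have := xconj hki
        rw [← this]; group
      rw [P_cons, P_cons, ← mul_assoc, hswap, mul_assoc, hM']
      group

/-- minimum of a nonempty list, via foldr -/
def lmin (i : ℕ) (M : List ℕ) : ℕ := M.foldr min i

lemma lmin_le_head (i : ℕ) (M : List ℕ) : lmin i M ≤ i := by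
  induction M with
  | nil => simp [lmin]
  | cons j M ih => simp only [lmin, List.foldr] at ih ⊢; omega

lemma lmin_le (i : ℕ) (M : List ℕ) : ∀ a ∈ M, lmin i M ≤ a := by
  induction M with
  | nil => simp
  | cons j M ih =>
    intro t ht
    rcases List.mem_cons.mp ht with rfl | htM
    · simp only [lmin, List.foldr]; omega
    · have := ih t htM
      simp only [lmin, List.foldr] at this ⊢; omega

lemma lmin_mem (i : ℕ) (M : List ℕ) : lmin i M ∈ i :: M := by
  induction M with
  | nil => simp [lmin]
  | cons j M ih =>
    have : lmin i (j :: M) = min j (lmin i M) := rfl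
    rcases le_or_gt j (lmin i M) with h | h
    · rw [this, min_eq_left h]; simp
    · rw [this, min_eq_right (le_of_lt h)]
      rcases List.mem_cons.mp ih with h' | h'
      · rw [h']; simp
      · right; exact List.mem_cons_of_mem _ h'

lemma lmin_cons (i j : ℕ) (M : List ℕ) : lmin i (j :: M) = min j (lmin i M) := rfl

lemma lmin_comm (i j : ℕ) (M : List ℕ) : min j (lmin i M) = min i (lmin j M) := by
  induction M with
  | nil => simp [lmin]; omega
  | cons k M ih =>
    rw [lmin_cons, lmin_cons]
    omega

lemma lmin_cons' (i j : ℕ) (M : List ℕ) : lmin i (j :: M) = min i (lmin j M) := by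
  rw [lmin_cons, lmin_comm]

/-- any nonempty positive word can be rewritten to end with its minimal letter -/
lemma move : ∀ (M : List ℕ) (i : ℕ),
    ∃ L' : List ℕ, L'.length + 1 = (i :: M).length ∧ P (i :: M) = P L' * x (lmin i M) := by
  intro M
  induction M with
  | nil => exact fun i => ⟨[], by simp, by simp [lmin, P_cons, P_single]⟩
  | cons j M ih =>
    intro i
    have hc : lmin i (j :: M) = min i (lmin j M) := lmin_cons' i j M
    rcases le_or_gt i (lmin j M) with h | h
    · -- head is minimal: push it through
      have hbound : ∀ t ∈ j :: M, i ≤ t := by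
        intro t ht
        rcases List.mem_cons.mp ht with rfl | htM
        · exact le_trans h (lmin_le_head _ _)
        · exact le_trans h (lmin_le _ M t htM)
      obtain ⟨M', hlen, hM'⟩ := push (j :: M) i hbound
      refine ⟨M', by simp [hlen], ?_⟩
      have hm : lmin i (j :: M) = i := by omega
      rw [hm, P_cons, hM']
    · -- minimum is in the tail
      obtain ⟨L', hlen, hL'⟩ := ih j
      refine ⟨i :: L', by simpa using hlen, ?_⟩
      have hm : lmin i (j :: M) = lmin j M := by omega
      rw [hm, P_cons, hL', P_cons]
      group

/-- injectivity of `ψ` on positive words -/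
lemma pos_inj : ∀ (n : ℕ) (L M : List ℕ), L.length + M.length = n →
    ψ (P L) = ψ (P M) → P L = P M := by
  intro n
  induction n using Nat.strong_induction_on with
  | _ n ih =>
    intro L M hlen h
    match L, M with
    | [], [] => rfl
    | [], (j :: M') =>
      exfalso
      have hgt := ψP_gt (j :: M') ((j:ℝ)+1) ⟨j, List.mem_cons_self, by norm_num⟩
      rw [← h] at hgt
      simp at hgt
    | (i :: L'), [] =>
      exfalso
      have hgt := ψP_gt (i :: L') ((i:ℝ)+1) ⟨i, List.mem_cons_self, by norm_num⟩
      rw [h] at hgt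
      simp at hgt
    | (i :: L'), (j :: M') =>
      have hk : lmin i L' = lmin j M' := by
        by_contra hne
        rcases Nat.lt_or_ge (lmin i L') (lmin j M') with hlt | hge
        · have h1 : ψ (P (j :: M')) ((lmin j M' : ℕ):ℝ) = ((lmin j M' : ℕ):ℝ) := by
            apply ψP_fix
            intro t ht
            have h2 : lmin j M' ≤ t := by
              rcases List.mem_cons.mp ht with rfl | htM
              · exact lmin_le_head _ _
              · exact lmin_le _ M' t htM
            exact_mod_cast h2
          have h3 : ((lmin j M':ℕ):ℝ) < ψ (P (i :: L')) ((lmin j M':ℕ):ℝ) := by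
            apply ψP_gt
            refine ⟨lmin i L', lmin_mem i L', ?_⟩
            exact_mod_cast hlt
          rw [h, h1] at h3
          exact lt_irrefl _ h3
        · have hlt : lmin j M' < lmin i L' := by omega
          have h1 : ψ (P (i :: L')) ((lmin i L' : ℕ):ℝ) = ((lmin i L' : ℕ):ℝ) := by
            apply ψP_fix
            intro t ht
            have h2 : lmin i L' ≤ t := by
              rcases List.mem_cons.mp ht with rfl | htM
              · exact lmin_le_head _ _
              · exact lmin_le _ L' t htM
            exact_mod_cast h2
          have h3 : ((lmin i L':ℕ):ℝ) < ψ (P (j :: M')) ((lmin i L':ℕ):ℝ) := by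
            apply ψP_gt
            refine ⟨lmin j M', lmin_mem j M', ?_⟩
            exact_mod_cast hlt
          rw [← h, h1] at h3
          exact lt_irrefl _ h3
      obtain ⟨L₁, hL₁len, hL₁⟩ := move L' i
      obtain ⟨M₁, hM₁len, hM₁⟩ := move M' j
      rw [← hk] at hM₁
      rw [hL₁, hM₁] at h ⊢
      rw [map_mul, map_mul] at h
      have hcan : ψ (P L₁) = ψ (P M₁) := mul_right_cancel h
      have : P L₁ = P M₁ := by
        apply ih (L₁.length + M₁.length) ?_ L₁ M₁ rfl hcan
        simp only [List.length_cons] at hL₁len hM₁len hlen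
        omega
      rw [this]

/-! ### Fraction decomposition -/

lemma gridl (L : List ℕ) : ∀ (m : ℕ), ∃ A B : List ℕ,
    A.length ≤ 1 ∧ P A * P L = P B * x m := by
  induction L using List.reverseRecOn with
  | nil => exact fun m => ⟨[m], [], by simp, by simp [P_single]⟩
  | append_singleton L i ih =>
    intro m
    rcases lt_trichotomy m i with hmi | hmi | hmi
    · obtain ⟨A, B, hA, hAB⟩ := ih m
      refine ⟨A, B ++ [i+1], hA, ?_⟩
      have hswap : x m * x i = x (i+1) * x m := by
        have := xconj hmi; rw [← this]; group
      rw [P_concat, P_concat, ← mul_assoc, hAB, mul_assoc, hswap, ← mul_assoc]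
    · subst hmi
      exact ⟨[], L, by simp, by rw [P_concat]; simp⟩
    · obtain ⟨A, B, hA, hAB⟩ := ih (m+1)
      refine ⟨A, B ++ [i], hA, ?_⟩
      have hswap : x (m+1) * x i = x i * x m := by
        have := xconj hmi; rw [← this]; group
      rw [P_concat, P_concat, ← mul_assoc, hAB, mul_assoc, hswap, ← mul_assoc]

lemma grid (Mq : List ℕ) : ∀ (Lp : List ℕ), ∃ U V : List ℕ,
    P U * P Lp = P V * P Mq := by
  induction Mq using List.reverseRecOn with
  | nil => exact fun Lp => ⟨[], Lp, by simp⟩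
  | append_singleton Mq j ih =>
    intro Lp
    obtain ⟨A, B, _, hAB⟩ := gridl Lp j
    obtain ⟨U', V', hUV⟩ := ih B
    refine ⟨U' ++ A, V', ?_⟩
    rw [P_append, P_concat, mul_assoc, hAB, ← mul_assoc, hUV]
    group

/-- every element of `ThompsonF` is a fraction of two positive words -/
lemma fraction (g : ThompsonF) : ∃ L M : List ℕ, g = (P L)⁻¹ * P M := by
  let S : Subgroup ThompsonF :=
  { carrier := {g | ∃ L M : List ℕ, g = (P L)⁻¹ * P M}
    one_mem' := ⟨[], [], by simp⟩
    inv_mem' := by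
      rintro g ⟨L, M, rfl⟩
      exact ⟨M, L, by group⟩
    mul_mem' := by
      rintro g h ⟨L, M, rfl⟩ ⟨L', M', rfl⟩
      obtain ⟨U, V, hUV⟩ := grid L' M
      have key : P M * (P L')⁻¹ = (P U)⁻¹ * P V := by
        calc P M * (P L')⁻¹ = (P U)⁻¹ * (P U * P M) * (P L')⁻¹ := by group
          _ = (P U)⁻¹ * (P V * P L') * (P L')⁻¹ := by rw [hUV]
          _ = (P U)⁻¹ * P V := by group
      refine ⟨U ++ L, V ++ M', ?_⟩
      rw [P_append, P_append]
      calc (P L)⁻¹ * P M * ((P L')⁻¹ * P M')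
          = (P L)⁻¹ * (P M * (P L')⁻¹) * P M' := by group
        _ = (P L)⁻¹ * ((P U)⁻¹ * P V) * P M' := by rw [key]
        _ = (P U * P L)⁻¹ * (P V * P M') := by group }
  have : ∀ g : ThompsonF, g ∈ S := by
    intro g
    apply PresentedGroup.generated_by
    intro j
    fin_cases j
    · refine ⟨[], [0], ?_⟩
      rw [P_single]
      simp only [P_nil, inv_one, one_mul]
      rfl
    · refine ⟨[], [1], ?_⟩
      rw [P_single]
      simp only [P_nil, inv_one, one_mul]
      rfl
  exact this g

/-- faithfulness of the concrete realization -/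
theorem ψ_inj : Function.Injective ψ := by
  rw [injective_iff_map_eq_one]
  intro g hg
  obtain ⟨L, M, rfl⟩ := fraction g
  rw [map_mul, map_inv] at hg
  have h1 : ψ (P M) = ψ (P L) := (inv_mul_eq_one.mp hg).symm
  have := pos_inj (M.length + L.length) M L rfl h1
  rw [this]
  group


/-! ### Supports and basic dynamics -/

/-- `u` is supported in `s` : it fixes every point outside `s`. -/
def SuppIn (u : Equiv.Perm ℝ) (s : Set ℝ) : Prop := ∀ t, t ∉ s → u t = t

lemma SuppIn.mono {u : Equiv.Perm ℝ} {s s' : Set ℝ} (h : SuppIn u s) (hs : s ⊆ s') :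
    SuppIn u s' := fun t ht => h t (fun hc => ht (hs hc))

lemma SuppIn.inv {u : Equiv.Perm ℝ} {s : Set ℝ} (h : SuppIn u s) : SuppIn u⁻¹ s := by
  intro t ht
  have := h t ht
  calc u⁻¹ t = u⁻¹ (u t) := by rw [this]
    _ = t := u.symm_apply_apply t

lemma SuppIn.mul {u v : Equiv.Perm ℝ} {s : Set ℝ} (hu : SuppIn u s) (hv : SuppIn v s) :
    SuppIn (u * v) s := by
  intro t ht
  rw [Equiv.Perm.mul_apply, hv t ht, hu t ht]

lemma disjoint_commute {u v : Equiv.Perm ℝ} {s s' : Set ℝ}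
    (hu : SuppIn u s) (hv : SuppIn v s') (hd : ∀ t, t ∉ s ∨ t ∉ s') : Commute u v := by
  have : Equiv.Perm.Disjoint u v := by
    intro t
    rcases hd t with h | h
    · exact Or.inl (hu t h)
    · exact Or.inr (hv t h)
  exact this.commute

/-- good permutations: strictly monotone, fixing the nonpositive reals -/
def good (u : Equiv.Perm ℝ) : Prop := StrictMono ⇑u ∧ ∀ t, t ≤ 0 → u t = t

lemma good_one : good 1 := ⟨fun _ _ h => h, fun _ _ => rfl⟩

lemma good_mul {u v : Equiv.Perm ℝ} (hu : good u) (hv : good v) : good (u * v) :=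
  ⟨fun _ _ h => hu.1 (hv.1 h), fun t ht => by
    rw [Equiv.Perm.mul_apply, hv.2 t ht, hu.2 t ht]⟩

lemma good_inv {u : Equiv.Perm ℝ} (hu : good u) : good u⁻¹ := by
  constructor
  · intro s t hst
    rcases lt_trichotomy (u⁻¹ s) (u⁻¹ t) with h | h | h
    · exact h
    · exfalso
      have : s = t := by
        have := congrArg u h
        simpa using this
      linarith
    · exfalso
      have := hu.1 h
      simp only [Equiv.Perm.apply_inv_self] at this
      linarith
  · intro t ht
    have := hu.2 t ht
    calc u⁻¹ t = u⁻¹ (u t) := by rw [this]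
      _ = t := u.symm_apply_apply t

/-- the subgroup of good permutations -/
def goodSub : Subgroup (Equiv.Perm ℝ) where
  carrier := {u | good u}
  one_mem' := good_one
  mul_mem' := fun hu hv => good_mul hu hv
  inv_mem' := fun hu => good_inv hu

lemma good_phi (n : ℕ) : good (φ n) :=
  ⟨φ_strictMono n, fun t ht => pf_fix (le_trans ht (by positivity))⟩

lemma ψ_good (g : ThompsonF) : good (ψ g) := by
  have : ∀ g : ThompsonF, g ∈ goodSub.comap ψ := by
    intro g
    apply PresentedGroup.generated_by
    intro j
    fin_cases j
    · show good (ψ (x 0)); rw [ψ_x]; exact good_phi 0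
    · show good (ψ (x 1)); rw [ψ_x]; exact good_phi 1
  exact this g

lemma ψ_mono (g : ThompsonF) : StrictMono ⇑(ψ g) := (ψ_good g).1
lemma ψ_nonpos (g : ThompsonF) {t : ℝ} (ht : t ≤ 0) : ψ g t = t := (ψ_good g).2 t ht

/-! ### The bump elements and their dynamics -/

/-- the bump element `w n = x_n x_{n+1}⁻¹`, supported in `(n, n+3)` -/
def w (n : ℕ) : ThompsonF := x n * (x (n+1))⁻¹

lemma φ_inv_apply (n : ℕ) (t : ℝ) : (φ n)⁻¹ t = pg n t := rfl

lemma ψw_apply (n : ℕ) (t : ℝ) : ψ (w n) t = pf n (pg (n+1) t) := by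
  rw [w, map_mul, map_inv, Equiv.Perm.mul_apply, ψ_x, ψ_x, φ_inv_apply, φ_apply]

lemma ψw_inv_apply (n : ℕ) (t : ℝ) : ψ ((w n)⁻¹) t = pf (n+1) (pg n t) := by
  rw [w, mul_inv_rev, inv_inv, map_mul, map_inv, Equiv.Perm.mul_apply, ψ_x, ψ_x,
    φ_inv_apply, φ_apply]

lemma w_fix {n : ℕ} {t : ℝ} (h : t ≤ n ∨ (n:ℝ) + 3 ≤ t) : ψ (w n) t = t := by
  rw [ψw_apply]
  unfold pf pg
  push_cast
  rcases h with h | h <;> split_ifs <;> linarith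

lemma w_suppin (n : ℕ) : SuppIn (ψ (w n)) (Set.Icc (n:ℝ) ((n:ℝ)+3)) := by
  intro t ht
  rw [Set.mem_Icc, not_and_or, not_le, not_le] at ht
  exact w_fix (by rcases ht with h | h; exacts [Or.inl h.le, Or.inr h.le])

lemma w0_double {t : ℝ} (h0 : 0 < t) (h1 : t ≤ 1) : ψ (w 0) t = 2*t := by
  rw [ψw_apply]
  unfold pf pg
  push_cast
  split_ifs <;> linarith

lemma w0_lt3 {t : ℝ} (h : t < 3) : ψ (w 0) t < 3 := by
  rw [ψw_apply]
  unfold pf pg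
  push_cast
  split_ifs <;> linarith

lemma ψ_pos (g : ThompsonF) {t : ℝ} (h : 0 < t) : 0 < ψ g t := by
  have h0 : ψ g 0 = 0 := ψ_nonpos g le_rfl
  calc (0:ℝ) = ψ g 0 := h0.symm
    _ < ψ g t := ψ_mono g h

lemma w1_inv_contract {t : ℝ} (h1 : 1 ≤ t) (h3 : t ≤ 3) : ψ ((w 1)⁻¹) t = (t+1)/2 := by
  rw [ψw_inv_apply]
  unfold pf pg
  push_cast
  split_ifs <;> linarith

lemma contract_iter : ∀ (j : ℕ) {t : ℝ}, 1 < t → t ≤ 3 →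
    ψ (((w 1)⁻¹)^j) t = 1 + (t-1)/2^j := by
  intro j
  induction j with
  | zero => intro t h1 h3; simp
  | succ p ih =>
    intro t h1 h3
    have hs : ψ (((w 1)⁻¹)^(p+1)) t = ψ (((w 1)⁻¹)^p) (ψ ((w 1)⁻¹) t) := by
      rw [pow_succ, map_mul, Equiv.Perm.mul_apply]
    rw [hs, w1_inv_contract h1.le h3, ih (by linarith) (by linarith)]
    ring

/-! ### pre-shrinking with `x₀⁻¹` -/

lemma pg0_le (t : ℝ) : pg 0 t ≤ t := by unfold pg; push_cast; split_ifs <;> linarith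

lemma pg0_dec {t : ℝ} (h : 1 ≤ t) : pg 0 t ≤ t - 1/2 := by
  unfold pg; push_cast; split_ifs <;> linarith

lemma x0_inv_pow_le (m : ℕ) (t : ℝ) : ψ ((x 0)⁻¹^m) t ≤ t := by
  induction m generalizing t with
  | zero => simp
  | succ p ih =>
    have hs : ψ ((x 0)⁻¹^(p+1)) t = ψ ((x 0)⁻¹^p) (ψ ((x 0)⁻¹) t) := by
      rw [pow_succ, map_mul, Equiv.Perm.mul_apply]
    have hx : ψ ((x 0)⁻¹) t = pg 0 t := by
      rw [map_inv, ψ_x, φ_inv_apply]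
    rw [hs, hx]
    exact le_trans (ih _) (pg0_le t)

lemma x0_inv_pow_shrink (m : ℕ) (t : ℝ) :
    ψ ((x 0)⁻¹^m) t ≤ 1 ∨ ψ ((x 0)⁻¹^m) t ≤ t - m/2 := by
  induction m generalizing t with
  | zero => right; simp
  | succ p ih =>
    have hs : ψ ((x 0)⁻¹^(p+1)) t = ψ ((x 0)⁻¹^p) (ψ ((x 0)⁻¹) t) := by
      rw [pow_succ, map_mul, Equiv.Perm.mul_apply]
    have hx : ψ ((x 0)⁻¹) t = pg 0 t := by rw [map_inv, ψ_x, φ_inv_apply]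
    rcases le_or_gt t 1 with h1 | h1
    · left
      rw [hs, hx]
      exact le_trans (x0_inv_pow_le p _) (le_trans (pg0_le t) h1)
    · rcases ih (pg 0 t) with h | h
      · left; rw [hs, hx]; exact h
      · right
        rw [hs, hx]
        have := pg0_dec h1.le
        push_cast
        linarith

lemma preshrink (M : ℝ) : ∃ m : ℕ, ∀ t, t ≤ M → ψ ((x 0)⁻¹^m) t ≤ 1 := by
  obtain ⟨m, hm⟩ := exists_nat_ge (2*M)
  refine ⟨m, fun t ht => ?_⟩
  rcases x0_inv_pow_shrink m t with h | h
  · exact h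
  · have : t - m/2 ≤ 1 := by linarith
    linarith

/-! ### pushing up with `w 0` -/

lemma double_pow : ∀ (j : ℕ) {t : ℝ}, 0 < t → 2^j * t ≤ 1 → ψ ((w 0)^j) t = 2^j * t := by
  intro j
  induction j with
  | zero => intro t _ _; simp
  | succ p ih =>
    intro t ht h1
    have hp : (2:ℝ)^p * t ≤ 1 := by
      have h2 : (2:ℝ)^p * t ≤ 2^(p+1) * t / 2 := by rw [pow_succ]; ring_nf; linarith [mul_pos (pow_pos (by norm_num : (0:ℝ) < 2) p) ht]
      nlinarith [pow_pos (by norm_num : (0:ℝ) < 2) p]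
    have hs : ψ ((w 0)^(p+1)) t = ψ (w 0) (ψ ((w 0)^p) t) := by
      rw [pow_succ', map_mul, Equiv.Perm.mul_apply]
    rw [hs, ih ht hp, w0_double (by positivity) hp]
    ring

lemma pow_lt3 : ∀ (j : ℕ) {t : ℝ}, t < 3 → ψ ((w 0)^j) t < 3 := by
  intro j
  induction j with
  | zero => intro t h; simpa
  | succ p ih =>
    intro t h
    have hs : ψ ((w 0)^(p+1)) t = ψ (w 0) (ψ ((w 0)^p) t) := by
      rw [pow_succ', map_mul, Equiv.Perm.mul_apply]
    rw [hs]
    exact w0_lt3 (ih h)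

lemma pushup : ∀ (j : ℕ) {t : ℝ}, 0 < t → t ≤ 1 → 1 < 2^j * t →
    ∃ k, 1 < ψ ((w 0)^k) t ∧ ψ ((w 0)^k) t ≤ 2 := by
  intro j
  induction j with
  | zero => intro t _ h1 h2; simp at h2; linarith
  | succ p ih =>
    intro t ht h1 h2
    by_cases hc : 1 < 2^p * t
    · exact ih ht h1 hc
    · push_neg at hc
      refine ⟨p+1, ?_, ?_⟩
      · have hs : ψ ((w 0)^(p+1)) t = ψ (w 0) (ψ ((w 0)^p) t) := by
          rw [pow_succ', map_mul, Equiv.Perm.mul_apply]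
        rw [hs, double_pow p ht hc, w0_double (by positivity) hc]
        calc (1:ℝ) < 2^(p+1) * t := h2
          _ = 2 * (2^p * t) := by ring
      · have hs : ψ ((w 0)^(p+1)) t = ψ (w 0) (ψ ((w 0)^p) t) := by
          rw [pow_succ', map_mul, Equiv.Perm.mul_apply]
        rw [hs, double_pow p ht hc, w0_double (by positivity) hc]
        linarith

lemma pushup' {t : ℝ} (ht : 0 < t) (h3 : t < 3) :
    ∃ k, 1 < ψ ((w 0)^k) t ∧ ψ ((w 0)^k) t < 3 := by
  rcases le_or_gt t 1 with h1 | h1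
  · obtain ⟨j, hj⟩ := pow_unbounded_of_one_lt (1/t) (by norm_num : (1:ℝ) < 2)
    have h2 : 1 < 2^j * t := by
      rw [div_lt_iff₀ ht] at hj
      linarith
    obtain ⟨k, hk1, hk2⟩ := pushup j ht h1 h2
    exact ⟨k, hk1, by linarith⟩
  · exact ⟨0, by simpa, by simpa⟩

/-! ### reaching all dyadics -/

lemma pf0_double {t : ℝ} (h0 : 0 < t) (h1 : t ≤ 1) : pf 0 t = 2*t := by
  unfold pf; push_cast; split_ifs <;> linarith

lemma pf1_eval {t : ℝ} (h0 : 1 < t) (h1 : t ≤ 2) : pf 1 t = 2*t - 1 := by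
  unfold pf; push_cast; split_ifs <;> linarith

lemma pg0_shift {t : ℝ} (h : 2 ≤ t) : pg 0 t = t - 1 := by
  unfold pg; push_cast; split_ifs <;> linarith

lemma dyadic_to_one : ∀ (μ m k : ℕ), m + k ≤ μ → 1 ≤ m →
    ∃ ζ : ThompsonF, ψ ζ ((m:ℝ)/2^k) = 1 := by
  intro μ
  induction μ with
  | zero => intro m k h hm; omega
  | succ ν ih =>
    intro m k hμ hm
    have h2k : (0:ℝ) < 2^k := by positivity
    have h2kn : (1:ℕ) ≤ 2^k := Nat.one_le_two_pow
    rcases Nat.lt_or_ge m (2^k) with hlt | hge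
    · -- q < 1 : double up
      have hk : 1 ≤ k := by
        by_contra hk
        have : k = 0 := by omega
        subst this; simp at hlt; omega
      obtain ⟨e, rfl⟩ : ∃ e, k = e + 1 := ⟨k-1, by omega⟩
      obtain ⟨ζ', hζ'⟩ := ih m e (by omega) hm
      refine ⟨ζ' * x 0, ?_⟩
      rw [map_mul, Equiv.Perm.mul_apply, ψ_x, φ_apply]
      have hq0 : (0:ℝ) < (m:ℝ)/2^(e+1) := by positivity
      have hq1 : (m:ℝ)/2^(e+1) ≤ 1 := by
        rw [div_le_one (by positivity)]
        exact_mod_cast hlt.le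
      rw [pf0_double hq0 hq1]
      have heq : 2 * ((m:ℝ)/2^(e+1)) = (m:ℝ)/2^e := by
        rw [pow_succ]; field_simp
      rw [heq]; exact hζ'
    · rcases Nat.lt_or_ge m (2^(k+1)) with hlt2 | hge2
      · rcases Nat.eq_or_lt_of_le hge with heq | hgt
        · refine ⟨1, ?_⟩
          rw [← heq]
          push_cast
          rw [div_self (by positivity)]
          simp
        · -- 1 < q < 2 : apply x 1
          have hk : 1 ≤ k := by
            by_contra hk
            have : k = 0 := by omega
            subst this; simp at hgt hlt2; omega
          obtain ⟨e, rfl⟩ : ∃ e, k = e + 1 := ⟨k-1, by omega⟩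
          have h2e : (1:ℕ) ≤ 2^e := Nat.one_le_two_pow
          have h2e2 : 2^e + 2^e = 2^(e+1) := by ring
          obtain ⟨ζ', hζ'⟩ := ih (m - 2^e) e (by omega) (by omega)
          refine ⟨ζ' * x 1, ?_⟩
          rw [map_mul, Equiv.Perm.mul_apply, ψ_x, φ_apply]
          have hq1 : (1:ℝ) < (m:ℝ)/2^(e+1) := by
            rw [lt_div_iff₀ (by positivity)]
            norm_num
            exact_mod_cast hgt
          have hq2 : (m:ℝ)/2^(e+1) ≤ 2 := by
            rw [div_le_iff₀ (by positivity)]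
            have hc : (m:ℝ) ≤ 2^(e+1+1) := by exact_mod_cast hlt2.le
            calc (m:ℝ) ≤ 2^(e+1+1) := hc
              _ = 2 * 2^(e+1) := by ring
          rw [pf1_eval hq1 hq2]
          have heq2 : 2 * ((m:ℝ)/2^(e+1)) - 1 = ((m - 2^e : ℕ):ℝ)/2^e := by
            have hcast : ((m - 2^e : ℕ):ℝ) = (m:ℝ) - 2^e := by
              push_cast [Nat.cast_sub (by omega : 2^e ≤ m)]
              ring
            rw [hcast, pow_succ]
            field_simp
          rw [heq2]; exact hζ'
      · -- q ≥ 2 : apply x 0 ⁻¹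
        have h2k2 : 2^k + 2^k = 2^(k+1) := by ring
        obtain ⟨ζ', hζ'⟩ := ih (m - 2^k) k (by omega) (by omega)
        refine ⟨ζ' * (x 0)⁻¹, ?_⟩
        rw [map_mul, map_inv, Equiv.Perm.mul_apply, ψ_x, φ_inv_apply]
        have hq2 : (2:ℝ) ≤ (m:ℝ)/2^k := by
          rw [le_div_iff₀ (by positivity)]
          have hc : ((2^(k+1) : ℕ):ℝ) ≤ (m:ℝ) := by exact_mod_cast hge2
          push_cast at hc
          calc (2:ℝ) * 2^k = 2^(k+1) := by ring
            _ ≤ (m:ℝ) := hc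
        rw [pg0_shift hq2]
        have heq3 : (m:ℝ)/2^k - 1 = ((m - 2^k : ℕ):ℝ)/2^k := by
          have hcast : ((m - 2^k : ℕ):ℝ) = (m:ℝ) - 2^k := by
            push_cast [Nat.cast_sub (by omega : 2^k ≤ m)]
            ring
          rw [hcast]
          field_simp
        rw [heq3]; exact hζ'

lemma dyadic_reach (m k : ℕ) (hm : 1 ≤ m) : ∃ ζ : ThompsonF, ψ ζ ((m:ℝ)/2^k) = 1 :=
  dyadic_to_one (m+k) m k le_rfl hm

lemma exists_dyadic {α β : ℝ} (hα : 0 < α) (hβ : α < β) :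
    ∃ m k : ℕ, 1 ≤ m ∧ α < (m:ℝ)/2^k ∧ (m:ℝ)/2^k < β := by
  obtain ⟨k, hk⟩ := pow_unbounded_of_one_lt (1/(β-α)) (by norm_num : (1:ℝ) < 2)
  have h2k : (0:ℝ) < 2^k := by positivity
  have hk' : 1/2^k < β - α := by
    rw [div_lt_iff₀ (by linarith)] at hk
    rw [div_lt_iff₀ h2k]
    nlinarith
  refine ⟨⌊α * 2^k⌋₊ + 1, k, by omega, ?_, ?_⟩
  · rw [lt_div_iff₀ h2k]
    push_cast
    exact Nat.lt_floor_add_one (α * 2^k)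
  · rw [div_lt_iff₀ h2k]
    have h1 : (⌊α * 2^k⌋₊ : ℝ) ≤ α * 2^k := Nat.floor_le (by positivity)
    have h3 : (1:ℝ) < (β - α) * 2^k := by
      have h4 := mul_lt_mul_of_pos_right hk' h2k
      rwa [div_mul_cancel₀ _ (ne_of_gt h2k)] at h4
    push_cast
    nlinarith

/-! ### the squeezing lemma -/

lemma squeeze {r M α β : ℝ} (hr : 0 < r) (hα : 0 < α) (hβ : α < β) :
    ∃ ζ : ThompsonF, ∀ t, r ≤ t → t ≤ M → α < ψ ζ t ∧ ψ ζ t < β := by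
  rcases lt_or_ge M r with hMr | hrM
  · exact ⟨1, fun t h1 h2 => absurd (h1.trans h2) (not_le.mpr hMr)⟩
  obtain ⟨m, k, hm1, hq1, hq2⟩ := exists_dyadic hα hβ
  set q := (m:ℝ)/2^k with hqdef
  obtain ⟨ζq, hζq⟩ := dyadic_reach m k hm1
  set e := ψ ζq β with he
  have h1e : 1 < e := by
    rw [← hζq]
    exact ψ_mono ζq hq2
  obtain ⟨m₀, hm₀⟩ := preshrink M
  obtain ⟨j, hj⟩ := pow_unbounded_of_one_lt (2/(e-1)) (by norm_num : (1:ℝ) < 2)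
  have h2j : (0:ℝ) < 2^j := by positivity
  have hj' : 2/2^j < e - 1 := by
    rw [div_lt_iff₀ (by linarith)] at hj
    rw [div_lt_iff₀ h2j]
    nlinarith
  set r₁ := ψ ((x 0)⁻¹^m₀) r with hr₁def
  have hr₁pos : 0 < r₁ := ψ_pos _ hr
  have hr₁3 : r₁ < 3 := lt_of_le_of_lt (hm₀ r hrM) (by norm_num)
  obtain ⟨k₁, hk₁, _⟩ := pushup' hr₁pos hr₁3
  refine ⟨ζq⁻¹ * ((w 1)⁻¹)^j * ((w 0)^k₁ * (x 0)⁻¹^m₀), fun t ht1 ht2 => ?_⟩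
  -- unfold the composition
  have hcomp : ψ (ζq⁻¹ * ((w 1)⁻¹)^j * ((w 0)^k₁ * (x 0)⁻¹^m₀)) t =
      ψ ζq⁻¹ (ψ (((w 1)⁻¹)^j) (ψ ((w 0)^k₁) (ψ ((x 0)⁻¹^m₀) t))) := by
    rw [map_mul, map_mul, map_mul, Equiv.Perm.mul_apply, Equiv.Perm.mul_apply,
      Equiv.Perm.mul_apply]
  set t₁ := ψ ((x 0)⁻¹^m₀) t with ht₁def
  have ht₁low : r₁ ≤ t₁ := (ψ_mono _).monotone ht1
  have ht₁pos : 0 < t₁ := lt_of_lt_of_le hr₁pos ht₁low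
  have ht₁hi : t₁ ≤ 1 := hm₀ t ht2
  set t₂ := ψ ((w 0)^k₁) t₁ with ht₂def
  have ht₂low : 1 < t₂ := lt_of_lt_of_le hk₁ ((ψ_mono _).monotone ht₁low)
  have ht₂hi : t₂ < 3 := pow_lt3 k₁ (by linarith : t₁ < 3)
  have ht₃ : ψ (((w 1)⁻¹)^j) t₂ = 1 + (t₂ - 1)/2^j := contract_iter j ht₂low ht₂hi.le
  set t₃ := ψ (((w 1)⁻¹)^j) t₂ with ht₃def
  have ht₃low : 1 < t₃ := by
    rw [ht₃]
    have : 0 < (t₂-1)/2^j := div_pos (by linarith) h2j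
    linarith
  have ht₃hi : t₃ < e := by
    rw [ht₃]
    have h2 : (t₂-1)/2^j < 2/2^j := by gcongr ?_ / _; linarith
    linarith
  have hinv1 : ψ ζq⁻¹ 1 = q := by
    rw [map_inv, ← hζq]
    exact Equiv.Perm.inv_apply_self _ _
  have hinv2 : ψ ζq⁻¹ e = β := by
    rw [map_inv, he]
    exact Equiv.Perm.inv_apply_self _ _
  rw [hcomp]
  constructor
  · calc α < q := hq1
      _ = ψ ζq⁻¹ 1 := hinv1.symm
      _ < ψ ζq⁻¹ t₃ := ψ_mono _ ht₃low
  · calc ψ ζq⁻¹ t₃ < ψ ζq⁻¹ e := ψ_mono _ ht₃hi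
      _ = β := hinv2


/-! ### The Higman commutator trick -/

lemma higman_abstract {G : Type*} [Group G] (h u v c : G) (hc : c = h * u * h⁻¹)
    (hcu : Commute c u) (hcv : Commute c v) : ⁅⁅h, u⁆, v⁆ = ⁅u⁻¹, v⁆ := by
  have hz : Commute c (u⁻¹ * v * u) := (hcu.inv_right.mul_right hcv).mul_right hcu
  have hz' : c * (u⁻¹ * v * u) * c⁻¹ = u⁻¹ * v * u := by
    rw [hz.eq]; group
  have hcu' : ⁅h, u⁆ = c * u⁻¹ := by rw [commutatorElement_def, hc]
  rw [hcu', commutatorElement_def, commutatorElement_def]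
  calc c * u⁻¹ * v * (c * u⁻¹)⁻¹ * v⁻¹
      = (c * (u⁻¹ * v * u) * c⁻¹) * v⁻¹ := by group
    _ = (u⁻¹ * v * u) * v⁻¹ := by rw [hz']
    _ = u⁻¹ * v * u⁻¹⁻¹ * v⁻¹ := by group

lemma comm_mem {N : Subgroup ThompsonF} [hN : N.Normal] {g : ThompsonF} (hg : g ∈ N)
    (z : ThompsonF) : ⁅g, z⁆ ∈ N := by
  rw [commutatorElement_def]
  have h1 : z * g⁻¹ * z⁻¹ ∈ N := hN.conj_mem _ (N.inv_mem hg) z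
  have h2 := N.mul_mem hg h1
  simpa [mul_assoc] using h2

lemma suppin_conj {g ζ : ThompsonF} {r M α β : ℝ}
    (hsupp : SuppIn (ψ g) (Set.Icc r M))
    (hsq : ∀ t, r ≤ t → t ≤ M → α < ψ ζ t ∧ ψ ζ t < β) :
    SuppIn (ψ (ζ * g * ζ⁻¹)) (Set.Ioo α β) := by
  intro t ht
  have hv : ψ (ζ * g * ζ⁻¹) t = ψ ζ (ψ g (ψ ζ⁻¹ t)) := by
    rw [map_mul, map_mul, Equiv.Perm.mul_apply, Equiv.Perm.mul_apply]
  by_cases hs : ψ ζ⁻¹ t ∈ Set.Icc r M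
  · exfalso
    obtain ⟨h1, h2⟩ := hsq _ hs.1 hs.2
    have : ψ ζ (ψ ζ⁻¹ t) = t := by
      rw [map_inv]; exact Equiv.Perm.apply_inv_self _ _
    rw [this] at h1 h2
    exact ht ⟨h1, h2⟩
  · rw [hv, hsupp _ hs, map_inv, Equiv.Perm.apply_inv_self]

/-- The key harvest: any two elements with common support bounded away from `0` and `∞`
have their commutator inside every nontrivial normal subgroup. -/
lemma harvest (N : Subgroup ThompsonF) [hN : N.Normal] (hbot : N ≠ ⊥)
    (u v : ThompsonF) (r M : ℝ) (hr : 0 < r)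
    (hu : SuppIn (ψ u) (Set.Icc r M)) (hv : SuppIn (ψ v) (Set.Icc r M)) :
    ⁅u, v⁆ ∈ N := by
  -- a nontrivial element of N
  obtain ⟨g, hgN, hg1⟩ : ∃ g ∈ N, g ≠ 1 := by
    by_contra hcon
    push_neg at hcon
    exact hbot ((Subgroup.eq_bot_iff_forall N).mpr hcon)
  have hψg : ψ g ≠ 1 := by
    intro h
    exact hg1 (ψ_inj (by rw [h, map_one]))
  obtain ⟨t₀', ht₀'⟩ : ∃ t, ψ g t ≠ t := by
    by_contra hcon
    push_neg at hcon
    exact hψg (Equiv.ext fun t => by rw [hcon t]; rfl)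
  -- arrange an upward-moved point
  obtain ⟨g', hg'N, hmove⟩ : ∃ g' ∈ N, t₀' < ψ g' t₀' := by
    rcases lt_or_gt_of_ne ht₀' with hlt | hgt
    · refine ⟨g⁻¹, N.inv_mem hgN, ?_⟩
      by_contra hcon
      push_neg at hcon
      have h2 := (ψ_mono g).monotone hcon
      rw [map_inv] at h2
      rw [Equiv.Perm.apply_inv_self] at h2
      · exact absurd (lt_of_le_of_lt h2 hlt) (lt_irrefl _)
    · exact ⟨g, hgN, hgt⟩
  set t₀ := t₀' with ht₀def
  have ht₀pos : 0 < t₀ := by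
    by_contra hcon
    push_neg at hcon
    rw [ψ_nonpos g' hcon] at hmove
    exact lt_irrefl _ hmove
  set β := ψ g' t₀ with hβdef
  obtain ⟨ζ, hζ⟩ := squeeze (r := r) (M := M) (α := t₀) (β := β) hr ht₀pos hmove
  -- conjugated elements supported in J = (t₀, β)
  set uc := ζ * u⁻¹ * ζ⁻¹ with hucdef
  set vc := ζ * v * ζ⁻¹ with hvcdef
  have hui : SuppIn (ψ u⁻¹) (Set.Icc r M) := by rw [map_inv]; exact hu.inv
  have husupp : SuppIn (ψ uc) (Set.Ioo t₀ β) := suppin_conj hui hζ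
  have hvsupp : SuppIn (ψ vc) (Set.Ioo t₀ β) := suppin_conj hv hζ
  -- the pushed-off conjugate
  set c := ψ g' * ψ uc * (ψ g')⁻¹ with hcdef
  have hcsupp : SuppIn c (Set.Ioi β) := by
    intro t ht
    simp only [Set.mem_Ioi, not_lt] at ht
    have hv' : c t = ψ g' (ψ uc ((ψ g')⁻¹ t)) := rfl
    have hs : (ψ g')⁻¹ t ∉ Set.Ioo t₀ β := by
      intro hs
      have h2 : ψ g' ((ψ g')⁻¹ t) > ψ g' t₀ := ψ_mono g' hs.1
      rw [Equiv.Perm.apply_inv_self] at h2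
      rw [← hβdef] at h2
      linarith
    rw [hv', husupp _ hs, Equiv.Perm.apply_inv_self]
  have hdisj : ∀ t : ℝ, t ∉ Set.Ioi β ∨ t ∉ Set.Ioo t₀ β := by
    intro t
    rcases le_or_gt t β with h | h
    · exact Or.inl (by simp [h, not_lt])
    · exact Or.inr (by simp [Set.mem_Ioo]; intro _; linarith)
  have hcu : Commute c (ψ uc) := disjoint_commute hcsupp husupp hdisj
  have hcv : Commute c (ψ vc) := disjoint_commute hcsupp hvsupp hdisj
  -- the Higman identity, transported to F by faithfulness
  have hid : ⁅⁅g', uc⁆, vc⁆ = ⁅uc⁻¹, vc⁆ := by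
    apply ψ_inj
    rw [map_commutatorElement, map_commutatorElement, map_commutatorElement, map_inv]
    exact higman_abstract (ψ g') (ψ uc) (ψ vc) c rfl hcu hcv
  have hmem : ⁅uc⁻¹, vc⁆ ∈ N := by
    rw [← hid]
    exact comm_mem (comm_mem hg'N uc) vc
  -- untangle the conjugation
  have huntangle : ⁅uc⁻¹, vc⁆ = ζ * ⁅u, v⁆ * ζ⁻¹ := by
    rw [hucdef, hvcdef, commutatorElement_def, commutatorElement_def]
    group
  rw [huntangle] at hmem
  have := hN.conj_mem _ hmem ζ⁻¹
  simpa [mul_assoc] using this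


/-! ### Explicit elements for the perfectness certificate -/

lemma pg_fix {n : ℕ} {t : ℝ} (h : t ≤ n) : pg n t = t := by
  unfold pg; split_ifs <;> linarith

lemma pg_shift {n : ℕ} {t : ℝ} (h : (n:ℝ)+2 ≤ t) : pg n t = t - 1 := by
  unfold pg; split_ifs <;> linarith

lemma pf_shift {n : ℕ} {t : ℝ} (h : (n:ℝ)+1 ≤ t) : pf n t = t + 1 := by
  unfold pf; split_ifs <;> linarith

lemma pg0_half {t : ℝ} (h0 : 0 ≤ t) (h2 : t ≤ 2) : pg 0 t = t/2 := by
  unfold pg; push_cast; split_ifs <;> linarith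

lemma pf0_big1 {t : ℝ} (h : 1/2 < t) : 1 < pf 0 t := by
  unfold pf; push_cast; split_ifs <;> linarith

lemma pf0_big2 {t : ℝ} (h : 1 < t) : 2 < pf 0 t := by
  unfold pf; push_cast; split_ifs <;> linarith

lemma pf0_big3 {t : ℝ} (h : 2 < t) : 3 < pf 0 t := by
  unfold pf; push_cast; split_ifs <;> linarith

/-- a copy of `w 0` conjugated down into `(0, 1/2)` -/
def h₀ : ThompsonF := (x 0)⁻¹^3 * w 0 * (x 0)^3

lemma x0pow3 (t : ℝ) : ψ ((x 0)^3) t = pf 0 (pf 0 (pf 0 t)) := by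
  have h : (x 0)^3 = x 0 * x 0 * x 0 := by rw [pow_succ, pow_two]
  rw [h, map_mul, map_mul]
  simp only [Equiv.Perm.mul_apply, ψ_x, φ_apply]

lemma x0ipow3 (t : ℝ) : ψ ((x 0)⁻¹^3) t = pg 0 (pg 0 (pg 0 t)) := by
  have h : (x 0)⁻¹^3 = (x 0)⁻¹ * (x 0)⁻¹ * (x 0)⁻¹ := by rw [pow_succ, pow_two]
  rw [h, map_mul, map_mul]
  simp only [Equiv.Perm.mul_apply, map_inv, ψ_x, φ_inv_apply]

lemma ψh₀_apply (t : ℝ) : ψ h₀ t = ψ ((x 0)⁻¹^3) (ψ (w 0) (ψ ((x 0)^3) t)) := by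
  rw [h₀, map_mul, map_mul, Equiv.Perm.mul_apply, Equiv.Perm.mul_apply]

lemma h₀_supp : SuppIn (ψ h₀) (Set.Icc 0 (1/2)) := by
  intro t ht
  rw [Set.mem_Icc, not_and_or, not_le, not_le] at ht
  rcases ht with h | h
  · exact ψ_nonpos h₀ h.le
  · have hbig : 3 < ψ ((x 0)^3) t := by
      rw [x0pow3]
      exact pf0_big3 (pf0_big2 (pf0_big1 h))
    rw [ψh₀_apply, w_fix (Or.inr (by push_cast; linarith))]
    rw [← Equiv.Perm.mul_apply, ← map_mul]
    have hone : (x 0)⁻¹^3 * (x 0)^3 = 1 := by group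
    rw [hone, map_one]
    rfl

lemma h₀_inv_eq : h₀⁻¹ = (x 0)⁻¹^3 * (w 0)⁻¹ * (x 0)^3 := by rw [h₀]; group

lemma ψh₀inv_small {t : ℝ} (h0 : 0 < t) (h1 : t < 1/32) : ψ (h₀⁻¹) t = t/2 := by
  have hh : ψ (h₀⁻¹) t = ψ ((x 0)⁻¹^3) (ψ ((w 0)⁻¹) (ψ ((x 0)^3) t)) := by
    rw [h₀_inv_eq, map_mul, map_mul, Equiv.Perm.mul_apply, Equiv.Perm.mul_apply]
  have e1 : ψ ((x 0)^3) t = 8*t := by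
    rw [x0pow3, pf0_double (t := t) h0 (by linarith)]
    rw [pf0_double (t := 2*t) (by linarith) (by linarith)]
    rw [pf0_double (t := 2*(2*t)) (by linarith) (by linarith)]
    ring
  have e2 : ψ ((w 0)⁻¹) (8*t) = 4*t := by
    rw [ψw_inv_apply, pg0_half (by linarith) (by linarith)]
    have h4 : (8*t)/2 = 4*t := by ring
    rw [h4]
    exact pf_fix (by push_cast; linarith)
  have e3 : ψ ((x 0)⁻¹^3) (4*t) = t/2 := by
    rw [x0ipow3, pg0_half (t := 4*t) (by linarith) (by linarith)]
    have h4 : (4*t)/2 = 2*t := by ring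
    rw [h4, pg0_half (t := 2*t) (by linarith) (by linarith)]
    have h5 : (2*t)/2 = t := by ring
    rw [h5, pg0_half (t := t) h0.le (by linarith)]
  rw [hh, e1, e2, e3]

lemma h₀_inv_supp : SuppIn (ψ (h₀⁻¹)) (Set.Icc 0 (1/2)) := by
  rw [map_inv]; exact h₀_supp.inv

/-- the conjugating elements `g_m = x₀ h₀⁻¹ x_m⁻¹` -/
def gel (m : ℕ) : ThompsonF := x 0 * h₀⁻¹ * (x m)⁻¹

lemma ψgel_apply (m : ℕ) (t : ℝ) : ψ (gel m) t = pf 0 (ψ (h₀⁻¹) (pg m t)) := by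
  rw [gel, map_mul, map_mul]
  simp only [Equiv.Perm.mul_apply, map_inv, ψ_x, φ_inv_apply, φ_apply]

lemma gel_supp (m : ℕ) (hm : 5 ≤ m) : SuppIn (ψ (gel m)) (Set.Icc (1/32) ((m:ℝ)+3)) := by
  intro t ht
  rw [Set.mem_Icc, not_and_or, not_le, not_le] at ht
  have hm' : (5:ℝ) ≤ m := by exact_mod_cast hm
  rcases ht with h | h
  · rcases le_or_gt t 0 with h0 | h0
    · exact ψ_nonpos _ h0
    · rw [ψgel_apply, pg_fix (by linarith), ψh₀inv_small h0 (by linarith),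
        pf0_double (by linarith) (by linarith)]
      ring
  · rw [ψgel_apply, pg_shift (by linarith)]
    rw [h₀_inv_supp _ (by
      rw [Set.mem_Icc, not_and_or]
      right
      push_neg
      linarith)]
    rw [pf_shift (by push_cast; linarith)]
    ring

/-! ### commutation facts -/

lemma commF_of_disjoint {p q : ThompsonF} {s s' : Set ℝ}
    (hp : SuppIn (ψ p) s) (hq : SuppIn (ψ q) s') (h : ∀ t, t ∉ s ∨ t ∉ s') :
    p * q = q * p := by
  apply ψ_inj
  rw [map_mul, map_mul]
  exact (disjoint_commute hp hq h).eq

lemma x_suppin (n : ℕ) : SuppIn (ψ (x n)) (Set.Ici (n:ℝ)) := by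
  intro t ht
  rw [Set.mem_Ici, not_le] at ht
  rw [ψ_x, φ_apply, pf_fix ht.le]

lemma w1_supp : SuppIn (ψ (w 1)) (Set.Icc (1:ℝ) 4) := by
  have := w_suppin 1
  norm_num at this
  exact this

lemma w2_supp : SuppIn (ψ (w 2)) (Set.Icc (2:ℝ) 5) := by
  have := w_suppin 2
  norm_num at this
  exact this

lemma comm_x5_w1 : x 5 * w 1 = w 1 * x 5 := by
  apply commF_of_disjoint (x_suppin 5) w1_supp
  intro t
  rcases le_or_gt t 4 with h | h
  · left; rw [Set.mem_Ici]; push_neg; push_cast; linarith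
  · right; rw [Set.mem_Icc]; push_neg; intro; linarith

lemma comm_x6_w2 : x 6 * w 2 = w 2 * x 6 := by
  apply commF_of_disjoint (x_suppin 6) w2_supp
  intro t
  rcases le_or_gt t 5 with h | h
  · left; rw [Set.mem_Ici]; push_neg; push_cast; linarith
  · right; rw [Set.mem_Icc]; push_neg; intro; linarith

lemma comm_h₀_w1 : h₀ * w 1 = w 1 * h₀ := by
  apply commF_of_disjoint h₀_supp w1_supp
  intro t
  rcases le_or_gt t (1/2) with h | h
  · right; rw [Set.mem_Icc]; push_neg; intro; linarith
  · left; rw [Set.mem_Icc]; push_neg; intro; linarith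

lemma comm_h₀_w2 : h₀ * w 2 = w 2 * h₀ := by
  apply commF_of_disjoint h₀_supp w2_supp
  intro t
  rcases le_or_gt t (1/2) with h | h
  · right; rw [Set.mem_Icc]; push_neg; intro; linarith
  · left; rw [Set.mem_Icc]; push_neg; intro; linarith

/-! ### the conjugation identities -/

lemma x0a : x 0 = a := rfl

lemma conjw {n : ℕ} (hn : 1 ≤ n) : a * w n * a⁻¹ = w (n+1) := by
  simp only [w]
  rw [← x_shift (by omega : 1 ≤ n+1), ← x_shift hn]
  group

lemma gel_conj {m n : ℕ} (hn : 1 ≤ n) (hcm : x m * w n = w n * x m)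
    (hch : h₀ * w n = w n * h₀) : gel m * w n * (gel m)⁻¹ = w (n+1) := by
  have s1 : (x m)⁻¹ * w n * ((x m)⁻¹)⁻¹ = w n := by
    rw [inv_inv]
    calc (x m)⁻¹ * w n * x m = (x m)⁻¹ * (w n * x m) := by group
      _ = (x m)⁻¹ * (x m * w n) := by rw [← hcm]
      _ = w n := by group
  have s2 : h₀⁻¹ * w n * (h₀⁻¹)⁻¹ = w n := by
    rw [inv_inv]
    calc h₀⁻¹ * w n * h₀ = h₀⁻¹ * (w n * h₀) := by group
      _ = h₀⁻¹ * (h₀ * w n) := by rw [← hch]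
      _ = w n := by group
  calc gel m * w n * (gel m)⁻¹
      = a * (h₀⁻¹ * ((x m)⁻¹ * w n * ((x m)⁻¹)⁻¹) * (h₀⁻¹)⁻¹) * a⁻¹ := by
        rw [gel, x0a]; group
    _ = a * (h₀⁻¹ * w n * (h₀⁻¹)⁻¹) * a⁻¹ := by rw [s1]
    _ = a * w n * a⁻¹ := by rw [s2]
    _ = w (n+1) := conjw hn

lemma gel5_conj : gel 5 * w 1 * (gel 5)⁻¹ = w 2 := gel_conj (by omega) comm_x5_w1 comm_h₀_w1
lemma gel6_conj : gel 6 * w 2 * (gel 6)⁻¹ = w 3 := gel_conj (by omega) comm_x6_w2 comm_h₀_w2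

lemma hA : x 1 * w 1 * (x 1)⁻¹ = w 1 * w 2 := by
  have h12 := xconj (show 1 < 2 by omega)
  simp only [w]
  rw [← h12]
  group

lemma hB : x 1 * w 2 * (x 1)⁻¹ = w 3 := by
  have h12 := xconj (show 1 < 2 by omega)
  have h13 := xconj (show 1 < 3 by omega)
  simp only [w]
  rw [← h13, ← h12]
  group

/-! ### the key theorem -/

theorem key (N : Subgroup ThompsonF) (hN : N.Normal) (hbot : N ≠ ⊥) :
    ⁅(PresentedGroup.of (0 : Fin 2) : ThompsonF), PresentedGroup.of (1 : Fin 2)⁆ ∈ N := by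
  haveI := hN
  -- harvest the two commutators
  have hg5 : SuppIn (ψ (gel 5)) (Set.Icc (1/32) 8) := by
    have := gel_supp 5 (by omega)
    norm_num at this
    exact this
  have hg6 : SuppIn (ψ (gel 6)) (Set.Icc (1/32) 9) := by
    have := gel_supp 6 (by omega)
    norm_num at this
    exact this
  have hd₁ : w 2 * (w 1)⁻¹ ∈ N := by
    have h := harvest N hbot (gel 5) (w 1) (1/32) 8 (by norm_num) hg5
      (w1_supp.mono (Set.Icc_subset_Icc (by norm_num) (by norm_num)))
    have e : ⁅gel 5, w 1⁆ = w 2 * (w 1)⁻¹ := by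
      rw [commutatorElement_def, ← gel5_conj]
    rwa [e] at h
  have hd₂ : w 3 * (w 2)⁻¹ ∈ N := by
    have h := harvest N hbot (gel 6) (w 2) (1/32) 9 (by norm_num) hg6
      (w2_supp.mono (Set.Icc_subset_Icc (by norm_num) (by norm_num)))
    have e : ⁅gel 6, w 2⁆ = w 3 * (w 2)⁻¹ := by
      rw [commutatorElement_def, ← gel6_conj]
    rwa [e] at h
  have dd : x 1 * (w 2 * (w 1)⁻¹) * (x 1)⁻¹ ∈ N := hN.conj_mem _ hd₁ (x 1)
  -- the certificate
  have hA' : x 1 * (w 1)⁻¹ * (x 1)⁻¹ = (w 1 * w 2)⁻¹ := by rw [← hA]; group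
  have hsplit : x 1 * (w 2 * (w 1)⁻¹) * (x 1)⁻¹
      = (x 1 * w 2 * (x 1)⁻¹) * (x 1 * (w 1)⁻¹ * (x 1)⁻¹) := by group
  have hval : x 1 * (w 2 * (w 1)⁻¹) * (x 1)⁻¹ = w 3 * (w 1 * w 2)⁻¹ := by
    rw [hsplit, hB, hA']
  have hfin : w 1 = (w 3 * (w 1 * w 2)⁻¹)⁻¹ * (w 3 * (w 2)⁻¹) := by group
  have w1N : w 1 ∈ N := by
    rw [hfin]
    apply N.mul_mem _ hd₂
    apply N.inv_mem
    rwa [hval] at dd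
  have hcb : (⁅(PresentedGroup.of (0 : Fin 2) : ThompsonF), PresentedGroup.of (1 : Fin 2)⁆)
      = (w 1)⁻¹ := by
    show ⁅a, b⁆ = (w 1)⁻¹
    rw [commutatorElement_def]
    have h1 : x 1 = b := rfl
    have h2 : x 2 = a * b * a⁻¹ := rfl
    simp only [w, h1, h2]
    group
  rw [hcb]
  exact N.inv_mem w1N

end TF

/-- If `f₀, f₁ ∈ PL₀(I)` do not commute but satisfy the two standard relations of
Thompson's group `F`, then they generate a standard isomorphic copy of `F`: there is
an injective homomorphism of `F` into `Perm ℝ` carrying the standard generators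
`x₀, x₁` to `f₀, f₁`, whose image is the subgroup generated by `f₀` and `f₁`. -/
theorem standard_copy_of_F (f₀ f₁ : Equiv.Perm ℝ)
    (h₀ : IsPL0 f₀) (h₁ : IsPL0 f₁) (hnc : f₀ * f₁ ≠ f₁ * f₀)
    (hrel : ThompsonRel f₀ f₁) :
    ∃ φ : ThompsonF →* Equiv.Perm ℝ, Function.Injective φ ∧
      φ (PresentedGroup.of (0 : Fin 2)) = f₀ ∧
      φ (PresentedGroup.of (1 : Fin 2)) = f₁ ∧
      φ.range = Subgroup.closure {f₀, f₁} := by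
  classical
  obtain ⟨hr1, hr2⟩ := hrel
  set f : Fin 2 → Equiv.Perm ℝ := ![f₀, f₁] with hf
  have hrels : ∀ r ∈ thompsonRels, FreeGroup.lift f r = 1 := by
    intro r hr
    rcases hr with h | h
    · subst h
      simpa only [map_commutatorElement, map_mul, map_inv, map_pow, FreeGroup.lift_apply_of, hf,
        Matrix.cons_val_zero, Matrix.cons_val_one, Matrix.head_cons] using hr1
    · subst h
      simpa only [map_commutatorElement, map_mul, map_inv, map_pow, FreeGroup.lift_apply_of, hf,
        Matrix.cons_val_zero, Matrix.cons_val_one, Matrix.head_cons] using hr2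
  refine ⟨PresentedGroup.toGroup hrels, ?_, ?_, ?_, ?_⟩
  · rw [← MonoidHom.ker_eq_bot_iff]
    by_contra hker
    have hc := TF.key _ (MonoidHom.normal_ker _) hker
    rw [MonoidHom.mem_ker, map_commutatorElement] at hc
    simp only [PresentedGroup.toGroup.of, hf, Matrix.cons_val_zero, Matrix.cons_val_one,
      Matrix.head_cons] at hc
    exact hnc (commutatorElement_eq_one_iff_mul_comm.mp hc)
  · simp [hf]
  · simp [hf]
  · rw [MonoidHom.range_eq_map, ← PresentedGroup.closure_range_of thompsonRels,
      MonoidHom.map_closure]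
    congr 1
    ext g
    constructor
    · rintro ⟨-, ⟨i, rfl⟩, rfl⟩
      fin_cases i
      · left; simp [hf]
      · right; simp [hf]
    · rintro (rfl | rfl)
      · exact ⟨_, ⟨0, rfl⟩, by simp [hf]⟩
      · exact ⟨_, ⟨1, rfl⟩, by simp [hf]⟩
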